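/- With yⱼ as in (the GKN construction) and Ωf := (−A[f,1]_K(−1), B[f,1]_K(1)) ∈ ℂ², one has Ωy₁ = (0, −192B), Ωy₂ = (−192A, 0), Ωy₃ = (0, 48B(A+2)), Ωy₄ = (48A(B+2), 0). -/
import Mathlib


open Set Filter Topology intervalIntegral

noncomputable def krallAlpha (A B : ℝ) : ℝ := 3*A + 3*B + 6

noncomputable def krallPi (A B : ℝ) (x : ℝ) : ℝ :=
  (-6*A - 6*B - 12*A*B)*x^2 + (12*A - 12*B)*x + (12*A*B + 18*A + 18*B + 24)

/-- The sixth-order Krall differential expression, expanded form. -/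
noncomputable def lK (A B : ℝ) (y : ℝ → ℝ) (x : ℝ) : ℝ :=
  (x^2 - 1)^3 * iteratedDeriv 6 y x
  + 18*x*(x^2 - 1)^2 * iteratedDeriv 5 y x
  + (x^2 - 1)*((3*A + 3*B + 96)*x^2 - 3*A - 3*B - 36) * iteratedDeriv 4 y x
  + (24*A + 24*B + 168)*x*(x^2 - 1) * iteratedDeriv 3 y x
  + ((12*A*B + 42*A + 42*B + 72)*x^2 + (12*B - 12*A)*x - 12*A*B - 30*A - 30*B - 72)
      * iteratedDeriv 2 y x
  + ((24*A*B + 12*A + 12*B)*x + 12*B - 12*A) * deriv y x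

/-- The sixth-order Krall differential expression, Lagrangian symmetric form. -/
noncomputable def lKsym (A B : ℝ) (y : ℝ → ℝ) (x : ℝ) : ℝ :=
  - iteratedDeriv 3 (fun t => (1 - t^2)^3 * iteratedDeriv 3 y t) x
  + iteratedDeriv 2 (fun t => (1 - t^2)*(12 + krallAlpha A B * (1 - t^2)) * iteratedDeriv 2 y t) x
  - deriv (fun t => krallPi A B t * deriv y t) x

/-- Λ[f](x) = −((1−x²)³f‴(x))′ + (1−x²)(12+α(1−x²))f″(x). -/
noncomputable def LamK (A B : ℝ) (f : ℝ → ℝ) (x : ℝ) : ℝ :=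
  - deriv (fun t => (1 - t^2)^3 * iteratedDeriv 3 f t) x
  + (1 - x^2)*(12 + krallAlpha A B * (1 - x^2)) * iteratedDeriv 2 f x

/-- [f,1]_K(x) = −((1−x²)³f‴)″ + ((1−x²)(12+α(1−x²))f″)′ − π(x)f′(x). -/
noncomputable def concOne (A B : ℝ) (f : ℝ → ℝ) (x : ℝ) : ℝ :=
  - iteratedDeriv 2 (fun t => (1 - t^2)^3 * iteratedDeriv 3 f t) x
  + deriv (fun t => (1 - t^2)*(12 + krallAlpha A B * (1 - t^2)) * iteratedDeriv 2 f t) x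
  - krallPi A B x * deriv f x

/-- The bilinear concomitant [f,g]_K of the Krall expression (real-valued case). -/
noncomputable def conc (A B : ℝ) (f g : ℝ → ℝ) (x : ℝ) : ℝ :=
  concOne A B f x * g x - concOne A B g x * f x
  - LamK A B f x * deriv g x + LamK A B g x * deriv f x
  - (1 - x^2)^3 * (iteratedDeriv 3 f x * iteratedDeriv 2 g x
      - iteratedDeriv 2 f x * iteratedDeriv 3 g x)


lemma dpoly (c0 c1 c2 c3 c4 c5 c6 c7 : ℝ) :
    deriv (fun x : ℝ => c0 + c1*x + c2*x^2 + c3*x^3 + c4*x^4 + c5*x^5 + c6*x^6 + c7*x^7)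
  = fun x : ℝ => c1 + (2*c2)*x + (3*c3)*x^2 + (4*c4)*x^3 + (5*c5)*x^4 + (6*c6)*x^5
      + (7*c7)*x^6 + 0*x^7 := by
  funext x
  have h : HasDerivAt (fun x : ℝ => c0 + c1*x + c2*x^2 + c3*x^3 + c4*x^4 + c5*x^5 + c6*x^6 + c7*x^7)
      (0 + c1*1 + c2*(2*x^1) + c3*(3*x^2) + c4*(4*x^3) + c5*(5*x^4) + c6*(6*x^5) + c7*(7*x^6)) x :=
    (((((((hasDerivAt_const x c0).add ((hasDerivAt_id' (𝕜 := ℝ) x).const_mul c1)).add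
      ((hasDerivAt_pow 2 x).const_mul c2)).add ((hasDerivAt_pow 3 x).const_mul c3)).add
      ((hasDerivAt_pow 4 x).const_mul c4)).add ((hasDerivAt_pow 5 x).const_mul c5)).add
      ((hasDerivAt_pow 6 x).const_mul c6)).add ((hasDerivAt_pow 7 x).const_mul c7)
  rw [h.deriv]; ring

lemma concOne_poly (A B c0 c1 c2 c3 c4 : ℝ) :
    concOne A B (fun x : ℝ => c0 + c1*x + c2*x^2 + c3*x^3 + c4*x^4 + 0*x^5 + 0*x^6 + 0*x^7)
  = fun x : ℝ =>
      (36*c3 + 432*c4*x - 216*c3*x^2 - 1440*c4*x^3 + 180*c3*x^4 + 1008*c4*x^5)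
    + (6*(12+krallAlpha A B)*c3
        + (2*(12*(12+krallAlpha A B)*c4 - 2*(12+2*krallAlpha A B)*c2))*x
        + (-18*(12+2*krallAlpha A B)*c3)*x^2
        + (4*(2*krallAlpha A B*c2 - 12*(12+2*krallAlpha A B)*c4))*x^3
        + (30*krallAlpha A B*c3)*x^4 + (72*krallAlpha A B*c4)*x^5)
    - krallPi A B x * (c1 + 2*c2*x + 3*c3*x^2 + 4*c4*x^3) := by
  have hd1 : deriv (fun x : ℝ => c0 + c1*x + c2*x^2 + c3*x^3 + c4*x^4 + 0*x^5 + 0*x^6 + 0*x^7)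
      = fun x : ℝ => c1 + (2*c2)*x + (3*c3)*x^2 + (4*c4)*x^3 + 0*x^4 + 0*x^5 + 0*x^6 + 0*x^7 := by
    rw [dpoly]; funext x; ring
  have hd2 : iteratedDeriv 2 (fun x : ℝ => c0 + c1*x + c2*x^2 + c3*x^3 + c4*x^4 + 0*x^5 + 0*x^6 + 0*x^7)
      = fun x : ℝ => (2*c2) + (6*c3)*x + (12*c4)*x^2 + 0*x^3 + 0*x^4 + 0*x^5 + 0*x^6 + 0*x^7 := by
    rw [iteratedDeriv_succ, iteratedDeriv_one, hd1, dpoly]; funext x; ring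
  have hd3 : iteratedDeriv 3 (fun x : ℝ => c0 + c1*x + c2*x^2 + c3*x^3 + c4*x^4 + 0*x^5 + 0*x^6 + 0*x^7)
      = fun x : ℝ => (6*c3) + (24*c4)*x + 0*x^2 + 0*x^3 + 0*x^4 + 0*x^5 + 0*x^6 + 0*x^7 := by
    rw [iteratedDeriv_succ, hd2, dpoly]; funext x; ring
  have hG3 : (fun t : ℝ => (1 - t^2)^3 *
        iteratedDeriv 3 (fun x : ℝ => c0 + c1*x + c2*x^2 + c3*x^3 + c4*x^4 + 0*x^5 + 0*x^6 + 0*x^7) t)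
      = fun t : ℝ => (6*c3) + (24*c4)*t + (-18*c3)*t^2 + (-72*c4)*t^3 + (18*c3)*t^4
          + (72*c4)*t^5 + (-6*c3)*t^6 + (-24*c4)*t^7 := by
    funext t; simp only [hd3]; ring
  have hG3i : iteratedDeriv 2 (fun t : ℝ => (1 - t^2)^3 *
        iteratedDeriv 3 (fun x : ℝ => c0 + c1*x + c2*x^2 + c3*x^3 + c4*x^4 + 0*x^5 + 0*x^6 + 0*x^7) t)
      = fun x : ℝ => -(36*c3) - 432*c4*x + 216*c3*x^2 + 1440*c4*x^3 - 180*c3*x^4 - 1008*c4*x^5 := by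
    rw [iteratedDeriv_succ, iteratedDeriv_one, hG3, dpoly, dpoly]; funext x; ring
  have hG2 : (fun t : ℝ => (1 - t^2)*(12 + krallAlpha A B * (1 - t^2)) *
        iteratedDeriv 2 (fun x : ℝ => c0 + c1*x + c2*x^2 + c3*x^3 + c4*x^4 + 0*x^5 + 0*x^6 + 0*x^7) t)
      = fun t : ℝ => ((12+krallAlpha A B)*2*c2) + ((12+krallAlpha A B)*6*c3)*t
          + ((12+krallAlpha A B)*12*c4 - (12+2*krallAlpha A B)*2*c2)*t^2
          + (-(12+2*krallAlpha A B)*6*c3)*t^3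
          + (krallAlpha A B*2*c2 - (12+2*krallAlpha A B)*12*c4)*t^4
          + (krallAlpha A B*6*c3)*t^5 + (krallAlpha A B*12*c4)*t^6 + 0*t^7 := by
    funext t; simp only [hd2]; ring
  have hG2d : deriv (fun t : ℝ => (1 - t^2)*(12 + krallAlpha A B * (1 - t^2)) *
        iteratedDeriv 2 (fun x : ℝ => c0 + c1*x + c2*x^2 + c3*x^3 + c4*x^4 + 0*x^5 + 0*x^6 + 0*x^7) t)
      = fun x : ℝ => 6*(12+krallAlpha A B)*c3
          + (2*(12*(12+krallAlpha A B)*c4 - 2*(12+2*krallAlpha A B)*c2))*x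
          + (-18*(12+2*krallAlpha A B)*c3)*x^2
          + (4*(2*krallAlpha A B*c2 - 12*(12+2*krallAlpha A B)*c4))*x^3
          + (30*krallAlpha A B*c3)*x^4 + (72*krallAlpha A B*c4)*x^5 := by
    rw [hG2, dpoly]; funext x; ring
  funext x
  simp only [concOne, hG3i, hG2d, hd1]
  ring

lemma concOne_congr (A B : ℝ) {f g : ℝ → ℝ} {s : Set ℝ} (hs : IsOpen s)
    (hfg : Set.EqOn f g s) {x : ℝ} (hx : x ∈ s) : concOne A B f x = concOne A B g x := by
  have hnx : s ∈ 𝓝 x := hs.mem_nhds hx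
  have h3 := hfg.iteratedDeriv_of_isOpen hs 3
  have h2 := hfg.iteratedDeriv_of_isOpen hs 2
  have hfg' : f =ᶠ[𝓝 x] g := by filter_upwards [hnx] with t ht; exact hfg ht
  have e3 : (fun t => (1 - t^2)^3 * iteratedDeriv 3 f t)
      =ᶠ[𝓝 x] (fun t => (1 - t^2)^3 * iteratedDeriv 3 g t) := by
    filter_upwards [hnx] with t ht; rw [h3 ht]
  have e2 : (fun t => (1 - t^2)*(12 + krallAlpha A B * (1 - t^2)) * iteratedDeriv 2 f t)
      =ᶠ[𝓝 x] (fun t => (1 - t^2)*(12 + krallAlpha A B * (1 - t^2)) * iteratedDeriv 2 g t) := by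
    filter_upwards [hnx] with t ht; rw [h2 ht]
  simp only [concOne, e3.iteratedDeriv_eq 2, e2.deriv_eq, hfg'.deriv_eq]

lemma concOne_key (A B : ℝ) {f P F : ℝ → ℝ} {s : Set ℝ} (hs : IsOpen s) {x₀ : ℝ}
    (hmem : s ∈ 𝓝[Set.Ioo (-1:ℝ) 1] x₀) (hfP : Set.EqOn f P s)
    (hF : concOne A B P = F) (hFc : Continuous F) :
    Filter.Tendsto (concOne A B f) (𝓝[Set.Ioo (-1:ℝ) 1] x₀) (𝓝 (F x₀)) := by
  have hev : concOne A B f =ᶠ[𝓝[Set.Ioo (-1:ℝ) 1] x₀] concOne A B P := by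
    filter_upwards [hmem] with t ht; exact concOne_congr A B hs hfP ht
  refine Filter.Tendsto.congr' hev.symm ?_
  rw [hF]
  exact (hFc.tendsto x₀).mono_left nhdsWithin_le_nhds

/-- with Ωf = (−A[f,1]_K(−1), B[f,1]_K(1)), where [f,1]_K(±1) are the
limits of [f,1]_K at ±1, one has Ωy₁ = (0,−192B), Ωy₂ = (−192A,0), Ωy₃ = (0,48B(A+2)),
Ωy₄ = (48A(B+2),0). -/
theorem krall_Omega_values (A B : ℝ) (hA : 0 < A) (hB : 0 < B)
    (y₁ y₂ y₃ y₄ : ℝ → ℝ)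
    (h₁ : ContDiffOn ℝ 6 y₁ (Set.Ioo (-1 : ℝ) 1))
    (h₂ : ContDiffOn ℝ 6 y₂ (Set.Ioo (-1 : ℝ) 1))
    (h₃ : ContDiffOn ℝ 6 y₃ (Set.Ioo (-1 : ℝ) 1))
    (h₄ : ContDiffOn ℝ 6 y₄ (Set.Ioo (-1 : ℝ) 1))
    (ε : ℝ) (hε : 0 < ε)
    (h₁l : ∀ x ∈ Set.Ioo (-1 : ℝ) (-1 + ε), y₁ x = 0)
    (h₁r : ∀ x ∈ Set.Ioo (1 - ε : ℝ) 1, y₁ x = (1 - x^2)^2)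
    (h₂l : ∀ x ∈ Set.Ioo (-1 : ℝ) (-1 + ε), y₂ x = (1 - x^2)^2)
    (h₂r : ∀ x ∈ Set.Ioo (1 - ε : ℝ) 1, y₂ x = 0)
    (h₃l : ∀ x ∈ Set.Ioo (-1 : ℝ) (-1 + ε), y₃ x = 0)
    (h₃r : ∀ x ∈ Set.Ioo (1 - ε : ℝ) 1, y₃ x = 1 - x^2)
    (h₄l : ∀ x ∈ Set.Ioo (-1 : ℝ) (-1 + ε), y₄ x = 1 - x^2)
    (h₄r : ∀ x ∈ Set.Ioo (1 - ε : ℝ) 1, y₄ x = 0) :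
    (∃ L₁ L₂ : ℝ,
      Filter.Tendsto (concOne A B y₁) (nhdsWithin (-1) (Set.Ioo (-1 : ℝ) 1)) (nhds L₁) ∧
      Filter.Tendsto (concOne A B y₁) (nhdsWithin 1 (Set.Ioo (-1 : ℝ) 1)) (nhds L₂) ∧
      (-A * L₁, B * L₂) = ((0 : ℝ), -192 * B)) ∧
    (∃ L₁ L₂ : ℝ,
      Filter.Tendsto (concOne A B y₂) (nhdsWithin (-1) (Set.Ioo (-1 : ℝ) 1)) (nhds L₁) ∧
      Filter.Tendsto (concOne A B y₂) (nhdsWithin 1 (Set.Ioo (-1 : ℝ) 1)) (nhds L₂) ∧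
      (-A * L₁, B * L₂) = ((-192 * A : ℝ), 0)) ∧
    (∃ L₁ L₂ : ℝ,
      Filter.Tendsto (concOne A B y₃) (nhdsWithin (-1) (Set.Ioo (-1 : ℝ) 1)) (nhds L₁) ∧
      Filter.Tendsto (concOne A B y₃) (nhdsWithin 1 (Set.Ioo (-1 : ℝ) 1)) (nhds L₂) ∧
      (-A * L₁, B * L₂) = ((0 : ℝ), 48 * B * (A + 2))) ∧
    (∃ L₁ L₂ : ℝ,
      Filter.Tendsto (concOne A B y₄) (nhdsWithin (-1) (Set.Ioo (-1 : ℝ) 1)) (nhds L₁) ∧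
      Filter.Tendsto (concOne A B y₄) (nhdsWithin 1 (Set.Ioo (-1 : ℝ) 1)) (nhds L₂) ∧
      (-A * L₁, B * L₂) = ((48 * A * (B + 2) : ℝ), 0)) := by
  have hFc : ∀ c0 c1 c2 c3 c4 : ℝ, Continuous
      (concOne A B (fun x : ℝ => c0 + c1*x + c2*x^2 + c3*x^3 + c4*x^4 + 0*x^5 + 0*x^6 + 0*x^7)) := by
    intro c0 c1 c2 c3 c4
    rw [concOne_poly]
    unfold krallPi krallAlpha
    fun_prop
  have hsL : IsOpen (Set.Ioo (-1:ℝ) 1 ∩ Set.Iio (-1+ε)) := isOpen_Ioo.inter isOpen_Iio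
  have hsR : IsOpen (Set.Ioo (-1:ℝ) 1 ∩ Set.Ioi (1-ε)) := isOpen_Ioo.inter isOpen_Ioi
  have hmemL : Set.Ioo (-1:ℝ) 1 ∩ Set.Iio (-1+ε) ∈ 𝓝[Set.Ioo (-1:ℝ) 1] (-1) :=
    Filter.inter_mem self_mem_nhdsWithin
      (mem_nhdsWithin_of_mem_nhds (Iio_mem_nhds (by linarith)))
  have hmemR : Set.Ioo (-1:ℝ) 1 ∩ Set.Ioi (1-ε) ∈ 𝓝[Set.Ioo (-1:ℝ) 1] (1:ℝ) :=
    Filter.inter_mem self_mem_nhdsWithin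
      (mem_nhdsWithin_of_mem_nhds (Ioi_mem_nhds (by linarith)))
  refine ⟨⟨_, _,
    concOne_key A B hsL hmemL (fun x hx => by rw [h₁l x ⟨hx.1.1, hx.2⟩]; ring) rfl (hFc 0 0 0 0 0),
    concOne_key A B hsR hmemR (fun x hx => by rw [h₁r x ⟨hx.2, hx.1.2⟩]; ring) rfl (hFc 1 0 (-2) 0 1),
    ?_⟩, ⟨_, _,
    concOne_key A B hsL hmemL (fun x hx => by rw [h₂l x ⟨hx.1.1, hx.2⟩]; ring) rfl (hFc 1 0 (-2) 0 1),
    concOne_key A B hsR hmemR (fun x hx => by rw [h₂r x ⟨hx.2, hx.1.2⟩]; ring) rfl (hFc 0 0 0 0 0),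
    ?_⟩, ⟨_, _,
    concOne_key A B hsL hmemL (fun x hx => by rw [h₃l x ⟨hx.1.1, hx.2⟩]; ring) rfl (hFc 0 0 0 0 0),
    concOne_key A B hsR hmemR (fun x hx => by rw [h₃r x ⟨hx.2, hx.1.2⟩]; ring) rfl (hFc 1 0 (-1) 0 0),
    ?_⟩, ⟨_, _,
    concOne_key A B hsL hmemL (fun x hx => by rw [h₄l x ⟨hx.1.1, hx.2⟩]; ring) rfl (hFc 1 0 (-1) 0 0),
    concOne_key A B hsR hmemR (fun x hx => by rw [h₄r x ⟨hx.2, hx.1.2⟩]; ring) rfl (hFc 0 0 0 0 0),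
    ?_⟩⟩ <;>
  · simp only [concOne_poly, Prod.mk.injEq, krallPi, krallAlpha]
    constructor <;> ring
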